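/- For n ≥ 2, let e_i = {v_{2i}, v_{2i+1}} (for 1 ≤ i ≤ n−1) be the path edges of H_{2n} joining consecutive blocks, i.e., the edges whose end-vertices have degree four in H_{2n}. Then for every subset F of {e₁, …, e_{n−1}}, the graph obtained from H_{2n} by deleting the edges of F has the same domination polynomial as H_{2n}. -/

import Mathlib

open Polynomial

variable {V W : Type*}

/-- `S` is a dominating set of `G`. -/
def Dominates (G : SimpleGraph V) (S : Finset V) : Prop :=
  ∀ v, v ∉ S → ∃ u ∈ S, G.Adj u v

open Classical in
/-- The domination polynomial of a finite simple graph. -/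
noncomputable def domPoly [Fintype V] (G : SimpleGraph V) : Polynomial ℤ :=
  ∑ S : Finset V, if Dominates G S then (X : Polynomial ℤ) ^ S.card else 0

/-- Stevanović's clique cover construction `C{G}`. -/
def cliqueCoverConstruction (G : SimpleGraph V) {k : ℕ} (C : Fin k → Finset V) :
    SimpleGraph (V ⊕ Fin k × Fin 2) where
  Adj x y :=
    match x, y with
    | Sum.inl a, Sum.inl b => G.Adj a b
    | Sum.inl a, Sum.inr (i, _) => a ∈ C i
    | Sum.inr (i, _), Sum.inl a => a ∈ C i
    | Sum.inr _, Sum.inr _ => False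
  symm := by
    constructor
    rintro (a | ⟨i, t⟩) (b | ⟨j, s⟩) h
    · exact G.adj_symm h
    · exact h
    · exact h
    · exact h.elim
  loopless := by
    constructor
    rintro (a | ⟨i, t⟩) h
    · exact G.irrefl h
    · exact h

/-- clique cover of the even path -/
def evenCover (n : ℕ) : Fin n → Finset (Fin (2 * n)) :=
  fun i => {⟨2 * i.val, by have := i.isLt; omega⟩, ⟨2 * i.val + 1, by have := i.isLt; omega⟩}

/-- The graph `H_{2n}`. -/
def H2n (n : ℕ) : SimpleGraph (Fin (2 * n) ⊕ Fin n × Fin 2) :=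
  cliqueCoverConstruction (SimpleGraph.pathGraph (2 * n)) (evenCover n)

lemma not_mem_F_mixed {n : ℕ} {F : Set (Sym2 (Fin (2 * n) ⊕ Fin n × Fin 2))}
    (hF : F ⊆ {e | ∃ (i : ℕ) (_ : 1 ≤ i) (_ : i ≤ n - 1),
      e = s(Sum.inl ⟨2 * i - 1, by omega⟩, Sum.inl ⟨2 * i, by omega⟩)})
    (a : Fin (2 * n)) (p : Fin n × Fin 2) : s(Sum.inl a, Sum.inr p) ∉ F := by
  intro h
  obtain ⟨i, _, _, he⟩ := hF h
  simp [Sym2.eq_iff] at he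

lemma not_mem_F_mixed' {n : ℕ} {F : Set (Sym2 (Fin (2 * n) ⊕ Fin n × Fin 2))}
    (hF : F ⊆ {e | ∃ (i : ℕ) (_ : 1 ≤ i) (_ : i ≤ n - 1),
      e = s(Sum.inl ⟨2 * i - 1, by omega⟩, Sum.inl ⟨2 * i, by omega⟩)})
    (a : Fin (2 * n)) (p : Fin n × Fin 2) : s(Sum.inr p, Sum.inl a) ∉ F := by
  rw [Sym2.eq_swap]; exact not_mem_F_mixed hF a p

lemma not_mem_F_block {n : ℕ} {F : Set (Sym2 (Fin (2 * n) ⊕ Fin n × Fin 2))}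
    (hF : F ⊆ {e | ∃ (i : ℕ) (_ : 1 ≤ i) (_ : i ≤ n - 1),
      e = s(Sum.inl ⟨2 * i - 1, by omega⟩, Sum.inl ⟨2 * i, by omega⟩)})
    (a b : Fin (2 * n)) (h : a.val / 2 = b.val / 2) :
    s(Sum.inl a, Sum.inl b) ∉ F := by
  intro h'
  obtain ⟨i, h1, h2, he⟩ := hF h'
  rw [Sym2.eq_iff] at he
  rcases he with ⟨ha, hb⟩ | ⟨ha, hb⟩ <;>
  · simp only [Sum.inl.injEq, Fin.ext_iff, Fin.val_mk] at ha hb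
    omega

lemma dom_iff {n : ℕ} {F : Set (Sym2 (Fin (2 * n) ⊕ Fin n × Fin 2))}
    (hF : F ⊆ {e | ∃ (i : ℕ) (_ : 1 ≤ i) (_ : i ≤ n - 1),
      e = s(Sum.inl ⟨2 * i - 1, by omega⟩, Sum.inl ⟨2 * i, by omega⟩)})
    (S : Finset (Fin (2 * n) ⊕ Fin n × Fin 2)) :
    Dominates ((H2n n).deleteEdges F) S ↔ Dominates (H2n n) S := by
  constructor
  · intro hd v hv
    obtain ⟨u, hu, hadj⟩ := hd v hv
    exact ⟨u, hu, ((SimpleGraph.deleteEdges_adj).mp hadj).1⟩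
  · intro hd v hv
    match v with
    | Sum.inr (i, t) =>
      obtain ⟨u, hu, hadj⟩ := hd _ hv
      match u with
      | Sum.inl b =>
        exact ⟨Sum.inl b, hu, SimpleGraph.deleteEdges_adj.mpr
          ⟨hadj, not_mem_F_mixed hF b (i, t)⟩⟩
      | Sum.inr p => exact absurd hadj (by simp [H2n, cliqueCoverConstruction])
    | Sum.inl a =>
      have hi : a.val / 2 < n := by have := a.isLt; omega
      set I : Fin n := ⟨a.val / 2, hi⟩ with hI
      have haC : a ∈ evenCover n I := by
        simp only [evenCover, Finset.mem_insert, Finset.mem_singleton, Fin.ext_iff, hI]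
        omega
      by_cases h0 : ∃ t : Fin 2, Sum.inr (I, t) ∈ S
      · obtain ⟨t, ht⟩ := h0
        refine ⟨Sum.inr (I, t), ht, SimpleGraph.deleteEdges_adj.mpr
          ⟨haC, not_mem_F_mixed' hF a (I, t)⟩⟩
      · push_neg at h0
        obtain ⟨u, hu, hadj⟩ := hd (Sum.inr (I, 0)) (h0 0)
        match u with
        | Sum.inr p => exact absurd hadj (by simp [H2n, cliqueCoverConstruction])
        | Sum.inl b =>
          have hbC : b ∈ evenCover n I := hadj
          have hba : b ≠ a := by rintro rfl; exact hv hu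
          simp only [evenCover, Finset.mem_insert, Finset.mem_singleton, Fin.ext_iff,
            hI] at haC hbC
          refine ⟨Sum.inl b, hu, SimpleGraph.deleteEdges_adj.mpr ⟨?_, ?_⟩⟩
          · show (SimpleGraph.pathGraph (2 * n)).Adj b a
            rw [SimpleGraph.pathGraph_adj]
            have : b.val ≠ a.val := fun h => hba (Fin.ext h)
            omega
          · exact not_mem_F_block hF b a (by omega)

theorem domPoly_H2n_deleteEdges (n : ℕ) (hn : 2 ≤ n)
    (F : Set (Sym2 (Fin (2 * n) ⊕ Fin n × Fin 2)))
    (hF : F ⊆ {e | ∃ (i : ℕ) (_ : 1 ≤ i) (_ : i ≤ n - 1),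
      e = s(Sum.inl ⟨2 * i - 1, by omega⟩, Sum.inl ⟨2 * i, by omega⟩)}) :
    domPoly ((H2n n).deleteEdges F) = domPoly (H2n n) := by
  classical
  unfold domPoly
  apply Finset.sum_congr rfl
  intro S _
  exact if_congr (dom_iff hF S) rfl rfl
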